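/- Let n ≥ 1 be an integer, λ = 1/√(n+1), and let h̃ ∈ ℝ^n satisfy ‖h̃‖_∞ ≤ 1. Define the initial point v⁰ = col(e − λh̃, e + λh̃) ∈ ℝ^{2n}, s⁰ = e ∈ ℝ^{2n}, and β⁰ = √(v⁰ s⁰). Then the initial proximity satisfies ξ(β⁰, 1) = ‖e − β⁰‖ ≤ 1/√2; equivalently, Σ_{i=1}^n [(1 − √(1 − λh̃_i))² + (1 − √(1 + λh̃_i))²] ≤ 1/2. -/

import Mathlib

open Finset


set_option maxHeartbeats 1000000 in
private lemma initial_proximity_key (t : ℝ) (ht : t^2 ≤ 1/2) :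
    (1 - Real.sqrt (1-t))^2 + (1 - Real.sqrt (1+t))^2 ≤ t^2/(2*(1-t^2)) := by
  have h1 : (0:ℝ) ≤ 1 - t := by nlinarith
  have h2 : (0:ℝ) ≤ 1 + t := by nlinarith
  set a := Real.sqrt (1-t) with ha'
  set b := Real.sqrt (1+t) with hb'
  have ha : a^2 = 1 - t := Real.sq_sqrt h1
  have hb : b^2 = 1 + t := Real.sq_sqrt h2
  have ha0 : 0 ≤ a := Real.sqrt_nonneg _
  have hb0 : 0 ≤ b := Real.sqrt_nonneg _
  set p := a + b with hp'
  set q := a * b with hq'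
  have hq0 : 0 ≤ q := mul_nonneg ha0 hb0
  have hqq : q^2 = 1 - t^2 := by rw [hq']; nlinarith [ha, hb]
  have hq2 : q^2 ≥ 1/2 := by nlinarith
  have hp2 : p^2 = 2 + 2*q := by rw [hp', hq']; nlinarith [ha, hb]
  have hq1 : q ≤ 1 := by nlinarith [sq_nonneg (q-1)]
  have hp0 : 0 ≤ p := by positivity
  have hple : p ≤ 2 := by nlinarith [sq_nonneg (p-2)]
  have hqge : q ≥ 7/10 := by nlinarith
  have hpge : p ≥ 3/2 := by nlinarith
  have hlhs : (1 - a)^2 + (1 - b)^2 = 4 - 2*p := by rw [hp']; nlinarith [ha, hb]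
  rw [hlhs]
  rw [le_div_iff₀ (by nlinarith : (0:ℝ) < 2*(1-t^2))]
  have hgoal : (4 - 2*p) * (2*q^2) ≤ 1 - q^2 := by
    have h2q : 2*q = p^2 - 2 := by linarith
    have h4 : 4*q^2 = (p^2-2)^2 := by rw [← h2q]; ring
    nlinarith [mul_nonneg (sq_nonneg (p-2)) (by nlinarith : (0:ℝ) ≤ 4*p^3 + 7*p^2 - 4*p - 8), h4]
  calc (4 - 2*p) * (2*(1-t^2)) = (4 - 2*p) * (2*q^2) := by rw [hqq]
    _ ≤ 1 - q^2 := hgoal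
    _ = t^2 := by rw [hqq]; ring

/-- the initial proximity measure. With `λ = 1/√(n+1)`, `‖h̃‖_∞ ≤ 1`,
`v⁰ = col(e − λh̃, e + λh̃)`, `s⁰ = e`, `β⁰ = √(v⁰s⁰)`, the initial proximity satisfies
`ξ(β⁰, 1) = ‖e − β⁰‖ ≤ 1/√2` (Euclidean norm); equivalently
`Σᵢ [(1 − √(1 − λh̃ᵢ))² + (1 − √(1 + λh̃ᵢ))²] ≤ 1/2`. -/
theorem initial_proximity {n : ℕ} (hn : 1 ≤ n)
    (lam : ℝ) (hlam : lam = 1 / Real.sqrt (n + 1))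
    (htil : Fin n → ℝ) (hbound : ∀ i, |htil i| ≤ 1)
    (v0 : Fin n ⊕ Fin n → ℝ)
    (hv0 : v0 = Sum.elim (fun i => 1 - lam * htil i) (fun i => 1 + lam * htil i))
    (s0 : Fin n ⊕ Fin n → ℝ) (hs0 : s0 = fun _ => 1)
    (β0 : Fin n ⊕ Fin n → ℝ) (hβ0 : β0 = fun i => Real.sqrt (v0 i * s0 i)) :
    Real.sqrt (∑ i, (1 - β0 i) ^ 2) / 1 ≤ 1 / Real.sqrt 2 ∧
      ∑ i, ((1 - Real.sqrt (1 - lam * htil i)) ^ 2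
        + (1 - Real.sqrt (1 + lam * htil i)) ^ 2) ≤ 1 / 2 := by
  have hn1 : (1:ℝ) ≤ (n:ℝ) := by exact_mod_cast hn
  have hnpos : (0:ℝ) < (n:ℝ) := by linarith
  have hlam2 : lam^2 = 1/((n:ℝ)+1) := by
    rw [hlam, div_pow, one_pow, Real.sq_sqrt (by positivity : (0:ℝ) ≤ (n:ℝ)+1)]
  have hterm : ∀ i : Fin n,
      (1 - Real.sqrt (1 - lam * htil i))^2 + (1 - Real.sqrt (1 + lam * htil i))^2
        ≤ 1/(2*(n:ℝ)) := by
    intro i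
    set t := lam * htil i with htdef
    have hh2 : (htil i)^2 ≤ 1 := by nlinarith [hbound i, abs_nonneg (htil i), sq_abs (htil i)]
    have ht0 : t^2 ≤ 1/((n:ℝ)+1) := by
      have : t^2 = lam^2 * (htil i)^2 := by rw [htdef]; ring
      rw [this, hlam2]
      have h1 : (0:ℝ) < (n:ℝ)+1 := by linarith
      nlinarith [sq_nonneg (htil i)]
    have ht1 : ((n:ℝ)+1) * t^2 ≤ 1 := by
      rw [div_eq_inv_mul] at ht0
      have h1 : (0:ℝ) < (n:ℝ)+1 := by linarith
      calc ((n:ℝ)+1) * t^2 ≤ ((n:ℝ)+1) * (((n:ℝ)+1)⁻¹ * 1) := by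
            apply mul_le_mul_of_nonneg_left _ (le_of_lt h1)
            simpa using ht0
        _ = 1 := by field_simp
    have ht2 : t^2 ≤ 1/2 := by nlinarith [sq_nonneg t]
    calc (1 - Real.sqrt (1 - t))^2 + (1 - Real.sqrt (1 + t))^2
        ≤ t^2/(2*(1-t^2)) := initial_proximity_key t ht2
      _ ≤ 1/(2*(n:ℝ)) := by
          rw [div_le_div_iff₀ (by nlinarith : (0:ℝ) < 2*(1-t^2)) (by linarith : (0:ℝ) < 2*(n:ℝ))]
          nlinarith
  have hsum : ∑ i : Fin n, ((1 - Real.sqrt (1 - lam * htil i)) ^ 2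
      + (1 - Real.sqrt (1 + lam * htil i)) ^ 2) ≤ 1/2 := by
    calc ∑ i : Fin n, ((1 - Real.sqrt (1 - lam * htil i)) ^ 2
          + (1 - Real.sqrt (1 + lam * htil i)) ^ 2)
        ≤ ∑ _i : Fin n, 1/(2*(n:ℝ)) := Finset.sum_le_sum (fun i _ => hterm i)
      _ = (n:ℝ) * (1/(2*(n:ℝ))) := by
          rw [Finset.sum_const, Finset.card_univ, Fintype.card_fin, nsmul_eq_mul]
      _ = 1/2 := by field_simp
  refine ⟨?_, hsum⟩
  have hEq : ∑ i, (1 - β0 i) ^ 2 = ∑ i : Fin n, ((1 - Real.sqrt (1 - lam * htil i)) ^ 2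
      + (1 - Real.sqrt (1 + lam * htil i)) ^ 2) := by
    subst hβ0 hs0 hv0
    rw [Fintype.sum_sum_type, ← Finset.sum_add_distrib]
    simp
  rw [div_one, hEq]
  calc Real.sqrt (∑ i : Fin n, ((1 - Real.sqrt (1 - lam * htil i)) ^ 2
        + (1 - Real.sqrt (1 + lam * htil i)) ^ 2)) ≤ Real.sqrt (1/2) :=
        Real.sqrt_le_sqrt hsum
    _ = 1 / Real.sqrt 2 := by
        rw [one_div, Real.sqrt_inv, one_div]
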